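/- Let X₁,…,X_N be Banach spaces over 𝕂 = ℝ or ℂ. If the pair (X₁×⋯×X_N, 𝕂) has the property L_{o,o} for N-linear forms, then the norm of the Banach space ℒ(X₁×⋯×X_N) of continuous N-linear forms is strongly subdifferentiable. -/

import Mathlib

/-- The norm of the Banach space `E` is strongly subdifferentiable at `x`: the one-sided limit
`lim_{t→0⁺} (‖x+th‖−1)/t` exists uniformly in `h` in the closed unit ball of `E`. -/
def SSDAt (𝕜 : Type*) {E : Type*} [RCLike 𝕜] [NormedAddCommGroup E] [NormedSpace 𝕜 E]
    (x : E) : Prop :=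
  ∃ τ : E → ℝ, ∀ ε > (0 : ℝ), ∃ δ > (0 : ℝ), ∀ t : ℝ, 0 < t → t < δ →
    ∀ h : E, ‖h‖ ≤ 1 → |(‖x + (t : 𝕜) • h‖ - 1) / t - τ h| < ε

/-- The norm of `E` is strongly subdifferentiable (at every point of the unit sphere). -/
def SSD (𝕜 E : Type*) [RCLike 𝕜] [NormedAddCommGroup E] [NormedSpace 𝕜 E] : Prop :=
  ∀ x : E, ‖x‖ = 1 → SSDAt 𝕜 x

section Aux
open RCLike Finset
variable {𝕜 : Type*} [RCLike 𝕜] {N : ℕ} {X : Fin N → Type*}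
  [∀ i, NormedAddCommGroup (X i)] [∀ i, NormedSpace 𝕜 (X i)]

lemma aux_le_norm (f : ContinuousMultilinearMap 𝕜 X 𝕜) {x : ∀ i, X i}
    (hx : ∀ i, ‖x i‖ = 1) : ‖f x‖ ≤ ‖f‖ := by
  have := f.le_opNorm x
  rwa [Finset.prod_eq_one (fun i _ => hx i), mul_one] at this

lemma aux_exists (f : ContinuousMultilinearMap 𝕜 X 𝕜) {e : ℝ} (he : 0 < e)
    (hfe : 0 ≤ ‖f‖ - e) : ∃ x : ∀ i, X i, (∀ i, ‖x i‖ = 1) ∧ ‖f‖ - e < ‖f x‖ := by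
  by_contra hc
  push_neg at hc
  have : ‖f‖ ≤ ‖f‖ - e := by
    rw [ContinuousMultilinearMap.opNorm_le_iff hfe]
    intro m
    by_cases hm : ∃ i, m i = 0
    · obtain ⟨i, hi⟩ := hm
      rw [f.map_coord_zero i hi, norm_zero]
      have : (0:ℝ) ≤ ∏ i, ‖m i‖ := Finset.prod_nonneg fun i _ => norm_nonneg _
      positivity
    · push_neg at hm
      have hmn : ∀ i, 0 < ‖m i‖ := fun i => norm_pos_iff.2 (hm i)
      set x : ∀ i, X i := fun i => (‖m i‖ : 𝕜)⁻¹ • m i with hxdef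
      have hx : ∀ i, ‖x i‖ = 1 := by
        intro i
        rw [hxdef]
        simp only [norm_smul, norm_inv, RCLike.norm_ofReal, abs_of_pos (hmn i)]
        exact inv_mul_cancel₀ (hmn i).ne'
      have hfx : f x = (∏ i, (‖m i‖ : 𝕜)⁻¹) • f m := f.toMultilinearMap.map_smul_univ _ m
      have hnorm : ‖f x‖ = (∏ i, ‖m i‖)⁻¹ * ‖f m‖ := by
        rw [hfx, norm_smul, norm_prod]
        congr 1
        rw [← Finset.prod_inv_distrib]
        exact Finset.prod_congr rfl fun i _ => by
          rw [norm_inv, RCLike.norm_ofReal, abs_of_pos (hmn i)]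
      have hple : (∏ i, ‖m i‖)⁻¹ * ‖f m‖ ≤ ‖f‖ - e := hnorm ▸ hc x hx
      have hppos : 0 < ∏ i, ‖m i‖ := Finset.prod_pos fun i _ => hmn i
      calc ‖f m‖ = ((∏ i, ‖m i‖)⁻¹ * ‖f m‖) * ∏ i, ‖m i‖ := by field_simp
        _ ≤ (‖f‖ - e) * ∏ i, ‖m i‖ := by
            exact mul_le_mul_of_nonneg_right hple hppos.le
  linarith

lemma aux_sub (f : ContinuousMultilinearMap 𝕜 X 𝕜) (hf : ‖f‖ ≤ 1)
    {x y : ∀ i, X i} (hx : ∀ i, ‖x i‖ = 1) (hy : ∀ i, ‖y i‖ = 1)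
    {e : ℝ} (he : 0 ≤ e) (hxy : ∀ i, ‖x i - y i‖ ≤ e) :
    ‖f x - f y‖ ≤ N * e := by
  have h := f.norm_image_sub_le' x y
  have hsum : ∑ i, ∏ j, (if j = i then ‖x i - y i‖ else max ‖x j‖ ‖y j‖) ≤ N * e := by
    calc ∑ i, ∏ j, (if j = i then ‖x i - y i‖ else max ‖x j‖ ‖y j‖)
        ≤ ∑ _i : Fin N, e := by
          refine Finset.sum_le_sum fun i _ => ?_
          calc ∏ j, (if j = i then ‖x i - y i‖ else max ‖x j‖ ‖y j‖)
              = ∏ j, (if j = i then ‖x i - y i‖ else 1) := by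
                refine Finset.prod_congr rfl fun j _ => ?_
                by_cases hj : j = i <;> simp [hj, hx, hy]
            _ = ‖x i - y i‖ := by simp [Finset.prod_ite_eq' Finset.univ i]
            _ ≤ e := hxy i
      _ = N * e := by simp [mul_comm]
  calc ‖f x - f y‖ ≤ ‖f‖ * ∑ i, ∏ j, (if j = i then ‖x i - y i‖ else max ‖x j‖ ‖y j‖) := h
    _ ≤ 1 * (N * e) := by
        refine mul_le_mul hf hsum ?_ zero_le_one
        refine Finset.sum_nonneg fun i _ => Finset.prod_nonneg fun j _ => ?_
        by_cases hj : j = i <;> simp [hj, le_max_iff]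
    _ = N * e := one_mul _

lemma aux_norm_smul {𝕜 : Type*} [RCLike 𝕜] {N : ℕ} {X : Fin N → Type*}
    [∀ i, NormedAddCommGroup (X i)] [∀ i, NormedSpace 𝕜 (X i)]
    {s : ℝ} (hs : 0 ≤ s) (B : ContinuousMultilinearMap 𝕜 X 𝕜) :
    ‖(s : 𝕜) • B‖ = s * ‖B‖ := by
  have h := norm_smul (β := ContinuousMultilinearMap 𝕜 X 𝕜) (s : 𝕜) B
  rw [h, RCLike.norm_ofReal, abs_of_nonneg hs]


end Aux

open RCLike Finset in
set_option maxHeartbeats 2000000 in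
/-- If the pair `(X₁×⋯×X_N, 𝕜)` has the property `L_{o,o}` for `N`-linear
forms, then the norm of the Banach space `ℒ(X₁×⋯×X_N)` of continuous `N`-linear forms is
strongly subdifferentiable. -/
theorem stmt_11 {𝕜 : Type*} [RCLike 𝕜] {N : ℕ} (X : Fin N → Type*)
    [∀ i, NormedAddCommGroup (X i)] [∀ i, NormedSpace 𝕜 (X i)] [∀ i, CompleteSpace (X i)]
    (hLoo : ∀ ε > (0 : ℝ), ∀ A : ContinuousMultilinearMap 𝕜 X 𝕜, ‖A‖ = 1 →
      ∃ η > (0 : ℝ), ∀ x : (∀ i, X i), (∀ i, ‖x i‖ = 1) → ‖A x‖ > 1 - η →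
        ∃ x₀ : (∀ i, X i), (∀ i, ‖x₀ i‖ = 1) ∧ ‖A x₀‖ = 1 ∧ ∀ i, ‖x₀ i - x i‖ < ε) :
    SSD 𝕜 (ContinuousMultilinearMap 𝕜 X 𝕜) := by
  intro A hA
  set S : ContinuousMultilinearMap 𝕜 X 𝕜 → Set ℝ := fun B => {q | ∃ t : ℝ, 0 < t ∧ q = (‖A + (t : 𝕜) • B‖ - 1) / t}
    with hSdef
  have hSne : ∀ B, (S B).Nonempty := fun B => ⟨_, 1, one_pos, rfl⟩
  have hnormlo : ∀ (s : ℝ) (B : ContinuousMultilinearMap 𝕜 X 𝕜), 0 < s → 1 - s * ‖B‖ ≤ ‖A + (s : 𝕜) • B‖ := by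
    intro s B hs
    have h1 : ‖A‖ - ‖A + (s : 𝕜) • B‖ ≤ ‖(s : 𝕜) • B‖ := by
      have := norm_sub_norm_le A (A + (s : 𝕜) • B)
      simpa using this
    rw [hA, aux_norm_smul hs.le B] at h1
    linarith
  have hSbdd : ∀ B, BddBelow (S B) := by
    intro B
    refine ⟨-‖B‖, ?_⟩
    rintro q ⟨s, hs, rfl⟩
    rw [le_div_iff₀ hs]
    have := hnormlo s B hs
    nlinarith
  refine ⟨fun B => sInf (S B), ?_⟩
  intro ε hε
  set ε' : ℝ := ε / (8 * (N + 1)) with hε'def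
  have hε' : 0 < ε' := by positivity
  obtain ⟨η, hη, hκ⟩ := hLoo ε' hε' A hA
  refine ⟨min (min (η / 3) (ε / 8)) (1 / 2), by positivity, ?_⟩
  intro t ht htδ B hB
  have ht2 : t < 1 / 2 := lt_of_lt_of_le htδ (min_le_right _ _)
  have htη : t < η / 3 := lt_of_lt_of_le htδ ((min_le_left _ _).trans (min_le_left _ _))
  have htε : t < ε / 8 := lt_of_lt_of_le htδ ((min_le_left _ _).trans (min_le_right _ _))
  set C : ContinuousMultilinearMap 𝕜 X 𝕜 := A + (t : 𝕜) • B with hCdef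
  have hCx_lo : 1 - t ≤ ‖C‖ := by
    have := hnormlo t B ht
    nlinarith [this, mul_le_mul_of_nonneg_left hB ht.le]
  have hCpos : 0 ≤ ‖C‖ - t ^ 2 := by nlinarith
  obtain ⟨x, hx1, hx2⟩ := aux_exists C (e := t ^ 2) (by positivity) hCpos
  have hAx_le : ‖A x‖ ≤ 1 := hA ▸ aux_le_norm A hx1
  have hBx_le : ‖B x‖ ≤ 1 := le_trans (aux_le_norm B hx1) hB
  have hCx_eq : C x = A x + (t : 𝕜) * B x := by
    rw [hCdef]
    simp [smul_eq_mul]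
  have htB : ‖(t : 𝕜) * B x‖ ≤ t := by
    rw [norm_mul, RCLike.norm_ofReal, abs_of_pos ht]
    nlinarith
  have hAx_lo : ‖A x‖ > 1 - η := by
    have h1 : ‖C x‖ - ‖(t : 𝕜) * B x‖ ≤ ‖A x‖ := by
      have := norm_sub_norm_le (C x) ((t : 𝕜) * B x)
      rw [hCx_eq] at this ⊢
      simpa using this
    nlinarith
  obtain ⟨y, hy1, hy2, hy3⟩ := hκ x hx1 hAx_lo
  set u : 𝕜 := A y with hudef
  have hu : ‖u‖ = 1 := hy2
  set r : ℝ := re ((starRingEnd 𝕜) u * B y) with hrdef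
  have hBy_le : ‖B y‖ ≤ 1 := le_trans (aux_le_norm B hy1) hB
  -- lower bound : every element of S B is ≥ r
  have hlow : ∀ q ∈ S B, r ≤ q := by
    rintro q ⟨s, hs, rfl⟩
    have happ : (A + (s : 𝕜) • B) y = u + (s : 𝕜) * B y := by simp [smul_eq_mul, hudef]
    have h1 : 1 + s * r ≤ ‖A + (s : 𝕜) • B‖ := by
      have e1 : re ((starRingEnd 𝕜) u * (u + (s : 𝕜) * B y)) = 1 + s * r := by
        rw [mul_add, map_add, RCLike.conj_mul, hu]
        have : (starRingEnd 𝕜) u * ((s : 𝕜) * B y) = (s : 𝕜) * ((starRingEnd 𝕜) u * B y) := by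
          ring
        rw [this, re_ofReal_mul, hrdef]
        norm_num
      have e2 : re ((starRingEnd 𝕜) u * (u + (s : 𝕜) * B y)) ≤ ‖(A + (s : 𝕜) • B) y‖ := by
        refine (re_le_norm _).trans ?_
        rw [norm_mul, norm_conj, hu, one_mul, happ]
      have e3 : ‖(A + (s : 𝕜) • B) y‖ ≤ ‖A + (s : 𝕜) • B‖ := aux_le_norm _ hy1
      linarith
    rw [le_div_iff₀ hs]
    linarith
  have hr_le : r ≤ sInf (S B) := le_csInf (hSne B) hlow
  have hinf_le : sInf (S B) ≤ (‖C‖ - 1) / t := csInf_le (hSbdd B) ⟨t, ht, rfl⟩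
  -- upper bound
  set c : 𝕜 := C x with hcdef
  have hc_lo : 1 - t - t ^ 2 < ‖c‖ := by
    have : ‖C‖ - t ^ 2 < ‖c‖ := hx2
    linarith
  have hc_pos : 0 < ‖c‖ := by nlinarith
  have hc_hi : ‖c‖ ≤ 1 + t := by
    have h1 : ‖c‖ ≤ ‖C‖ := aux_le_norm C hx1
    have h2 : ‖C‖ ≤ ‖A‖ + ‖(t : 𝕜) • B‖ := norm_add_le _ _
    have h3 : ‖(t : 𝕜) • B‖ ≤ t := by
      rw [aux_norm_smul ht.le B]
      nlinarith
    rw [hA] at h2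
    linarith
  set σ : 𝕜 := (‖c‖ : 𝕜)⁻¹ * c with hσdef
  have hσ : ‖σ‖ = 1 := by
    rw [hσdef, norm_mul, norm_inv, RCLike.norm_ofReal, abs_of_pos hc_pos]
    exact inv_mul_cancel₀ hc_pos.ne'
  have hre_c : re ((starRingEnd 𝕜) σ * c) = ‖c‖ := by
    have h1 : (starRingEnd 𝕜) σ * c = ((‖c‖⁻¹ * ‖c‖ ^ 2 : ℝ) : 𝕜) := by
      simp only [hσdef, map_mul, map_inv₀, RCLike.conj_ofReal]
      rw [mul_assoc, RCLike.conj_mul]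
      push_cast
      ring
    rw [h1, RCLike.ofReal_re]
    field_simp
  have hσc : ‖σ - c‖ ≤ t + t ^ 2 := by
    have h0 : σ - c = ((‖c‖ : 𝕜)⁻¹ - 1) * c := by rw [hσdef]; ring
    have h1 : ‖σ - c‖ = |‖c‖⁻¹ - 1| * ‖c‖ := by
      rw [h0, norm_mul, show ((‖c‖ : 𝕜)⁻¹ - 1 : 𝕜) = ((‖c‖⁻¹ - 1 : ℝ) : 𝕜) by push_cast; ring,
        RCLike.norm_ofReal]
    have h2 : |‖c‖⁻¹ - 1| * ‖c‖ = |1 - ‖c‖| := by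
      calc |‖c‖⁻¹ - 1| * ‖c‖ = |(‖c‖⁻¹ - 1) * ‖c‖| := by
            rw [abs_mul, abs_of_pos hc_pos]
        _ = |1 - ‖c‖| := by rw [sub_mul, inv_mul_cancel₀ hc_pos.ne', one_mul]
    refine le_trans (le_of_eq (h1.trans h2)) (abs_le.2 ⟨by linarith [sq_nonneg t], by linarith⟩)
  have hcAx : ‖c - A x‖ ≤ t := by
    have : c - A x = (t : 𝕜) * B x := by rw [hCx_eq]; ring
    rw [this]; exact htB
  have hAxu : ‖A x - u‖ ≤ (N : ℝ) * ε' := by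
    refine aux_sub A (le_of_eq hA) hx1 hy1 hε'.le fun i => ?_
    rw [norm_sub_rev]; exact (hy3 i).le
  have hBxy : ‖B x - B y‖ ≤ (N : ℝ) * ε' := by
    refine aux_sub B hB hx1 hy1 hε'.le fun i => ?_
    rw [norm_sub_rev]; exact (hy3 i).le
  have hσu : ‖σ - u‖ ≤ 2 * t + t ^ 2 + (N : ℝ) * ε' := by
    have h0 : σ - u = (σ - c) + ((c - A x) + (A x - u)) := by ring
    calc ‖σ - u‖ ≤ ‖σ - c‖ + (‖c - A x‖ + ‖A x - u‖) :=
          h0 ▸ (norm_add_le _ _).trans (by gcongr; exact norm_add_le _ _)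
      _ ≤ 2 * t + t ^ 2 + (N : ℝ) * ε' := by linarith
  have e2 : re ((starRingEnd 𝕜) σ * A x) ≤ 1 := by
    refine le_trans (re_le_norm _) ?_
    rw [norm_mul, norm_conj, hσ, one_mul]; exact hAx_le
  have e3 : re ((starRingEnd 𝕜) σ * B x) ≤ r + (2 * t + t ^ 2 + (N : ℝ) * ε') + (N : ℝ) * ε' := by
    have hsplit : (starRingEnd 𝕜) σ * B x =
        (starRingEnd 𝕜) u * B y + ((starRingEnd 𝕜) σ * (B x - B y) +
          ((starRingEnd 𝕜) σ - (starRingEnd 𝕜) u) * B y) := by ring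
    rw [hsplit, map_add, map_add]
    have b1 : re ((starRingEnd 𝕜) σ * (B x - B y)) ≤ (N : ℝ) * ε' := by
      refine le_trans (re_le_norm _) ?_
      rw [norm_mul, norm_conj, hσ, one_mul]; exact hBxy
    have b2 : re (((starRingEnd 𝕜) σ - (starRingEnd 𝕜) u) * B y) ≤ 2 * t + t ^ 2 + (N : ℝ) * ε' := by
      refine le_trans (re_le_norm _) ?_
      rw [norm_mul, ← map_sub, norm_conj]
      calc ‖σ - u‖ * ‖B y‖ ≤ (2 * t + t ^ 2 + (N : ℝ) * ε') * 1 :=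
            mul_le_mul hσu hBy_le (norm_nonneg _) (by positivity)
        _ = 2 * t + t ^ 2 + (N : ℝ) * ε' := mul_one _
    rw [hrdef]; linarith
  have e1 : ‖c‖ = re ((starRingEnd 𝕜) σ * A x) + t * re ((starRingEnd 𝕜) σ * B x) := by
    rw [← hre_c]
    have hexp : (starRingEnd 𝕜) σ * c =
        (starRingEnd 𝕜) σ * A x + (t : 𝕜) * ((starRingEnd 𝕜) σ * B x) := by
      rw [hCx_eq]; ring
    rw [hexp, map_add, re_ofReal_mul]
  have hup : (‖C‖ - 1) / t ≤ r + (3 * t + t ^ 2 + 2 * ((N : ℝ) * ε')) := by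
    have h1 : ‖C‖ ≤ ‖c‖ + t ^ 2 := by linarith [hx2]
    have h2 : t * re ((starRingEnd 𝕜) σ * B x) ≤
        t * (r + (2 * t + t ^ 2 + (N : ℝ) * ε') + (N : ℝ) * ε') :=
      mul_le_mul_of_nonneg_left e3 ht.le
    have h3 : t * (r + (2 * t + t ^ 2 + (N : ℝ) * ε') + (N : ℝ) * ε') + t ^ 2 =
        (r + (3 * t + t ^ 2 + 2 * ((N : ℝ) * ε'))) * t := by ring
    rw [div_le_iff₀ ht]
    linarith [h1, h2, e2, e1]
  have hNε : (N : ℝ) * ε' ≤ ε / 8 := by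
    have hεeq : ε = ε' * (8 * ((N : ℝ) + 1)) := by rw [hε'def]; field_simp
    linarith [hε'.le]
  have htsq : t ^ 2 < t := by
    have h := mul_lt_mul_of_pos_left (lt_trans ht2 one_half_lt_one) ht
    rw [mul_one] at h
    calc t ^ 2 = t * t := sq t
      _ < t := h
  have herr : 3 * t + t ^ 2 + 2 * ((N : ℝ) * ε') < ε := by linarith
  have hfin : 0 ≤ (‖C‖ - 1) / t - sInf (S B) := by linarith
  have : |(‖C‖ - 1) / t - sInf (S B)| < ε := by
    rw [abs_of_nonneg hfin]
    linarith
  exact this
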